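/- For every n ≥ 4 the following three set identities hold: PAIRS(2n) = { n − y : y ∈ pairs(n+1) }; pairs(2n+1) = PAIRS(2n); and pairs(2n) = PAIRS(2n) ∪ PAIRS(2n−2). -/

import Mathlib

/-- The Thue–Morse sequence: sum of binary digits of `n`, mod 2. -/
def tm (n : ℕ) : Fin 2 := Fin.ofNat 2 (Nat.digits 2 n).sum

/-- The factor of the Thue–Morse word of length `n` starting at position `i`. -/
def tmWord (i n : ℕ) : List (Fin 2) := (List.range n).map (fun j => tm (i + j))

/-- A binary word is a factor of the Thue–Morse word. -/
def IsFactor (w : List (Fin 2)) : Prop := ∃ i : ℕ, w = tmWord i w.length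

/-- Number of occurrences of the word `x` as a factor of `u`. -/
def occCount (u x : List (Fin 2)) : ℕ :=
  ((List.range u.length).filter (fun i => (u.drop i).take x.length = x)).length

/-- Two binary words (of equal length) are 2-abelian equivalent: same first letter,
same last letter, and the same number of occurrences of every word of length 2. -/
def TwoAbelianEquiv (u v : List (Fin 2)) : Prop :=
  u.length = v.length ∧ u.take 1 = v.take 1 ∧
  u.drop (u.length - 1) = v.drop (v.length - 1) ∧
  ∀ x : List (Fin 2), x.length = 2 → occCount u x = occCount v x

/-- `P n` is the 2-abelian complexity of the Thue–Morse word: the number of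
2-abelian equivalence classes of factors of length `n`. -/
noncomputable def P (n : ℕ) : ℕ :=
  Nat.card (Quot (fun u v : {w : List (Fin 2) // w.length = n ∧ IsFactor w} =>
    TwoAbelianEquiv u.1 v.1))

/-- `pword w` counts the pairs in `w`: the total number of occurrences of `00` and `11`. -/
def pword (w : List (Fin 2)) : ℕ := occCount w [0, 0] + occCount w [1, 1]

/-- The set of possible pair counts of Thue–Morse factors of length `n`. -/
def pairs (n : ℕ) : Set ℕ :=
  { m | ∃ w : List (Fin 2), w.length = n ∧ IsFactor w ∧ pword w = m }

/-- The set of possible pair counts of Thue–Morse factors of length `n`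
occurring at some odd position (pure odd factors). -/
def PAIRS (n : ℕ) : Set ℕ := { m | ∃ i : ℕ, i % 2 = 1 ∧ pword (tmWord i n) = m }

def eqc (i n : ℕ) : ℕ :=
  ((List.range n).filter (fun j => tm (i+j) = tm (i+j+1))).length
def neqc (i n : ℕ) : ℕ :=
  ((List.range n).filter (fun j => tm (i+j) ≠ tm (i+j+1))).length

lemma tmWord_cons (i n : ℕ) : tmWord i (n+1) = tm i :: tmWord (i+1) n := by
  unfold tmWord
  rw [List.range_succ_eq_map, List.map_cons, List.map_map]
  simp only [add_zero]
  congr 1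
  apply List.map_congr_left
  intro a _
  simp only [Function.comp_apply]
  congr 1
  omega

lemma occCount_cons (a : Fin 2) (u x : List (Fin 2)) :
    occCount (a :: u) x
      = (if (a :: u).take x.length = x then 1 else 0) + occCount u x := by
  unfold occCount
  rw [List.length_cons, List.range_succ_eq_map, List.filter_cons]
  have hc : List.filter ((fun i => decide ((List.drop i (a::u)).take x.length = x)) ∘ Nat.succ)
      (List.range u.length)
      = List.filter (fun i => decide ((List.drop i u).take x.length = x))
        (List.range u.length) := by
    apply List.filter_congr; intro i _; simp
  by_cases h : (a :: u).take x.length = x <;>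
    simp [h, List.filter_map, hc] <;> omega

lemma eqc_zero (i : ℕ) : eqc i 0 = 0 := by simp [eqc]
lemma neqc_zero (i : ℕ) : neqc i 0 = 0 := by simp [neqc]

lemma eqc_succ (i n : ℕ) :
    eqc i (n+1) = eqc i n + (if tm (i+n) = tm (i+n+1) then 1 else 0) := by
  unfold eqc
  rw [List.range_succ, List.filter_append, List.length_append]
  by_cases h : tm (i+n) = tm (i+n+1) <;> simp [h]

lemma neqc_succ (i n : ℕ) :
    neqc i (n+1) = neqc i n + (if tm (i+n) ≠ tm (i+n+1) then 1 else 0) := by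
  unfold neqc
  rw [List.range_succ, List.filter_append, List.length_append]
  by_cases h : tm (i+n) = tm (i+n+1) <;> simp [h]

lemma eqc_cons (i n : ℕ) :
    eqc i (n+1) = (if tm i = tm (i+1) then 1 else 0) + eqc (i+1) n := by
  unfold eqc
  rw [List.range_succ_eq_map, List.filter_cons]
  have hc : List.filter ((fun j => decide (tm (i+j) = tm (i+j+1))) ∘ Nat.succ)
      (List.range n)
      = List.filter (fun j => decide (tm (i+1+j) = tm (i+1+j+1))) (List.range n) := by
    apply List.filter_congr; intro j _
    simp only [Function.comp_apply]
    have e1 : i + j.succ = i + 1 + j := by omega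
    have e2 : i + j.succ + 1 = i + 1 + j + 1 := by omega
    rw [e1]
  by_cases h : tm i = tm (i+1) <;> simp [h, List.filter_map, hc, add_comm]

lemma pword_tmWord (n : ℕ) : ∀ i, pword (tmWord i (n+1)) = eqc i n := by
  induction n with
  | zero =>
    intro i
    simp [pword, occCount, tmWord, eqc_zero, List.range_succ]
  | succ n ih =>
    intro i
    rw [tmWord_cons, pword, occCount_cons, occCount_cons]
    have ht : (tm i :: tmWord (i+1) (n+1)).take 2 = [tm i, tm (i+1)] := by
      rw [tmWord_cons]; simp
    simp only [List.length_cons, List.length_nil, List.length_singleton, Nat.reduceAdd] at *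
    simp only [ht]
    have hs : ((if [tm i, tm (i+1)] = [0,0] then 1 else 0) : ℕ)
        + (if [tm i, tm (i+1)] = [1,1] then 1 else 0)
        = if tm i = tm (i+1) then 1 else 0 := by
      generalize tm i = a; generalize tm (i+1) = b
      fin_cases a <;> fin_cases b <;> decide
    have := ih (i+1)
    rw [pword] at this
    rw [eqc_cons]
    omega

lemma tm_even (k : ℕ) : tm (2*k) = tm k := by
  rcases Nat.eq_zero_or_pos k with h|h
  · simp [h]
  · unfold tm
    simp only [Fin.ofNat_eq_cast]
    rw [Nat.digits_def' (by norm_num : 1 < 2) (by omega)]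
    simp [Nat.mul_div_cancel_left, Nat.mul_mod_right]

lemma tm_odd (k : ℕ) : tm (2*k+1) = tm k + 1 := by
  unfold tm
  simp only [Fin.ofNat_eq_cast]
  rw [Nat.digits_def' (by norm_num : 1 < 2) (by omega)]
  have h1 : (2*k+1) % 2 = 1 := by omega
  have h2 : (2*k+1) / 2 = k := by omega
  rw [h1, h2, List.sum_cons]
  apply Fin.ext
  simp only [Fin.val_add, Fin.val_natCast, Fin.val_one]
  omega

lemma ite_ne (a b : Fin 2) :
    ((if a + 1 = b then 1 else 0) : ℕ) = if a ≠ b then 1 else 0 := by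
  fin_cases a <;> fin_cases b <;> decide

lemma ite_self_succ (a : Fin 2) : ((if a = a + 1 then 1 else 0) : ℕ) = 0 := by
  fin_cases a <;> decide

lemma ite_oe (x y c : ℕ) (hx : x = 2*c) (hy : y = 2*c+1) :
    ((if tm x = tm y then 1 else 0) : ℕ) = 0 := by
  subst hx; subst hy; rw [tm_even, tm_odd, ite_self_succ]

lemma ite_cross (x y c : ℕ) (hx : x = 2*c+1) (hy : y = 2*c+2) :
    ((if tm x = tm y then 1 else 0) : ℕ) = if tm c ≠ tm (c+1) then 1 else 0 := by
  subst hx; subst hy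
  rw [show 2*c+2 = 2*(c+1) from by ring, tm_odd, tm_even, ite_ne]

lemma eqc_odd (m : ℕ) : ∀ n, eqc (2*m+1) (2*n) = neqc m n ∧
    eqc (2*m+1) (2*n+1) = neqc m (n+1) := by
  intro n
  induction n with
  | zero =>
    refine ⟨by simp [eqc_zero, neqc_zero], ?_⟩
    rw [show 2*0+1 = 0+1 from rfl, eqc_succ, eqc_zero, neqc_succ, neqc_zero,
      ite_cross (2*m+1+0) (2*m+1+0+1) m (by ring) (by ring),
      show m+0 = m from rfl, show m+0+1 = m+1 from rfl]
  | succ n ih =>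
    obtain ⟨h1, h2⟩ := ih
    have key1 : eqc (2*m+1) (2*(n+1)) = neqc m (n+1) := by
      rw [show 2*(n+1) = (2*n+1)+1 from by ring, eqc_succ, h2,
        ite_oe (2*m+1+(2*n+1)) (2*m+1+(2*n+1)+1) (m+n+1) (by ring) (by ring), add_zero]
    refine ⟨key1, ?_⟩
    rw [eqc_succ, key1,
      ite_cross (2*m+1+2*(n+1)) (2*m+1+2*(n+1)+1) (m+n+1) (by ring) (by ring)]
    conv_rhs => rw [neqc_succ]
    rw [show m+(n+1) = m+n+1 from by ring]

lemma eqc_even (k : ℕ) : ∀ n, eqc (2*k) (2*n) = neqc k n ∧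
    eqc (2*k) (2*n+1) = neqc k n := by
  intro n
  induction n with
  | zero =>
    refine ⟨by simp [eqc_zero, neqc_zero], ?_⟩
    rw [show 2*0+1 = 0+1 from rfl, eqc_succ, eqc_zero, neqc_zero,
      ite_oe (2*k+0) (2*k+0+1) k (by ring) (by ring)]
  | succ n ih =>
    obtain ⟨h1, h2⟩ := ih
    have key1 : eqc (2*k) (2*(n+1)) = neqc k (n+1) := by
      rw [show 2*(n+1) = (2*n+1)+1 from by ring, eqc_succ, h2,
        ite_cross (2*k+(2*n+1)) (2*k+(2*n+1)+1) (k+n) (by ring) (by ring)]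
      conv_rhs => rw [neqc_succ]
    refine ⟨key1, ?_⟩
    rw [eqc_succ, key1,
      ite_oe (2*k+2*(n+1)) (2*k+2*(n+1)+1) (k+n+1) (by ring) (by ring), add_zero]


lemma tmWord_length (i n : ℕ) : (tmWord i n).length = n := by simp [tmWord]

lemma eqc_add_neqc (i n : ℕ) : eqc i n + neqc i n = n := by
  induction n with
  | zero => simp [eqc_zero, neqc_zero]
  | succ n ih =>
    rw [eqc_succ, neqc_succ]
    by_cases h : tm (i+n) = tm (i+n+1) <;> simp [h] <;> omega

lemma pairs_char (N M : ℕ) (h : N = M + 1) :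
    pairs N = {x | ∃ i, eqc i M = x} := by
  subst h
  ext x
  simp only [pairs, Set.mem_setOf_eq]
  constructor
  · rintro ⟨w, hlen, ⟨i, hw⟩, hp⟩
    refine ⟨i, ?_⟩
    rw [hw, hlen] at hp
    rw [← hp, pword_tmWord]
  · rintro ⟨i, hx⟩
    exact ⟨tmWord i (M+1), tmWord_length _ _,
      ⟨i, by rw [tmWord_length]⟩, by rw [pword_tmWord]; exact hx⟩

lemma PAIRS_char (N M : ℕ) (h : N = 2*(M+1)) :
    PAIRS N = {x | ∃ m, neqc m (M+1) = x} := by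
  subst h
  have hw : ∀ i, pword (tmWord i (2*(M+1))) = eqc i (2*M+1) := by
    intro i
    rw [show 2*(M+1) = (2*M+1)+1 from by ring, pword_tmWord]
  ext x
  simp only [PAIRS, Set.mem_setOf_eq]
  constructor
  · rintro ⟨i, hi, hp⟩
    obtain ⟨m, rfl⟩ : ∃ m, i = 2*m+1 := ⟨i/2, by omega⟩
    exact ⟨m, by rw [← hp, hw, (eqc_odd m M).2]⟩
  · rintro ⟨m, hx⟩
    exact ⟨2*m+1, by omega, by rw [hw, (eqc_odd m M).2]; exact hx⟩

theorem thueMorse_pairs_recursion (n : ℕ) (hn : 4 ≤ n) :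
    PAIRS (2 * n) = (fun y => n - y) '' pairs (n + 1) ∧
    pairs (2 * n + 1) = PAIRS (2 * n) ∧
    pairs (2 * n) = PAIRS (2 * n) ∪ PAIRS (2 * n - 2) := by
  obtain ⟨p, rfl⟩ : ∃ p, n = p + 2 := ⟨n - 2, by omega⟩
  rw [PAIRS_char (2*(p+2)) (p+1) (by ring),
      PAIRS_char (2*(p+2)-2) p (by omega),
      pairs_char (p+2+1) (p+2) rfl,
      pairs_char (2*(p+2)+1) (2*(p+1)+1+1) (by ring),
      pairs_char (2*(p+2)) (2*(p+1)+1) (by omega), show p+1+1 = p+2 from by omega]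
  refine ⟨?_, ?_, ?_⟩
  · ext x
    simp only [Set.mem_setOf_eq, Set.mem_image]
    constructor
    · rintro ⟨m, rfl⟩
      refine ⟨eqc m (p+2), ⟨m, rfl⟩, ?_⟩
      have := eqc_add_neqc m (p+2)
      omega
    · rintro ⟨y, ⟨m, rfl⟩, hy⟩
      refine ⟨m, ?_⟩
      have := eqc_add_neqc m (p+2)

      omega
  · ext x
    simp only [Set.mem_setOf_eq]
    constructor
    · rintro ⟨i, rfl⟩
      rcases Nat.even_or_odd i with ⟨k, hk⟩ | ⟨k, hk⟩
      · refine ⟨k, ?_⟩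
        rw [show i = 2*k from by omega, show 2*(p+1)+1+1 = 2*(p+2) from by ring,
          (eqc_even k (p+2)).1]
      · refine ⟨k, ?_⟩
        rw [show i = 2*k+1 from by omega, show 2*(p+1)+1+1 = 2*(p+2) from by ring,
          (eqc_odd k (p+2)).1]
    · rintro ⟨m, rfl⟩
      exact ⟨2*m+1, by rw [show 2*(p+1)+1+1 = 2*(p+2) from by ring, (eqc_odd m (p+2)).1]⟩
  · ext x
    simp only [Set.mem_setOf_eq, Set.mem_union]
    constructor
    · rintro ⟨i, rfl⟩
      rcases Nat.even_or_odd i with ⟨k, hk⟩ | ⟨k, hk⟩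
      · exact Or.inr ⟨k, by rw [show i = 2*k from by omega, (eqc_even k (p+1)).2]⟩
      · exact Or.inl ⟨k, by rw [show i = 2*k+1 from by omega, (eqc_odd k (p+1)).2]⟩
    · rintro (⟨m, rfl⟩ | ⟨m, rfl⟩)
      · exact ⟨2*m+1, by rw [(eqc_odd m (p+1)).2]⟩
      · exact ⟨2*m, by rw [(eqc_even m (p+1)).2]⟩
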